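/- For every continuous feasible strategy (p, I) with stopping CDF P and every T ≥ 0, it holds that ∫_0^T P(t) dt ≤ ∫_0^T (1 − e^{−(c/Ī)t}) dt. In particular, when the strategy is exhaustive (its expected stopping time ∫_0^∞ (1 − P(t)) dt equals Ī/c), its stopping time distribution second-order stochastically dominates the exponential distribution with rate c/Ī, i.e., the exponential distribution is a mean-preserving spread of it. -/

import Mathlib

open MeasureTheory

/-- Stopping CDF of a continuous-time strategy with stopping intensity `p`:
`P(t) = 1 − exp(−∫_0^t p(s) ds)`. -/
noncomputable def contCDF (p : ℝ → ℝ) (t : ℝ) : ℝ :=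
  1 - Real.exp (-(∫ s in (0:ℝ)..t, p s))

/-- A continuous feasible strategy for the continuous-time relaxed
information-acquisition problem with flow capacity `c` and target information
measure `Ibar`. -/
def ContFeasible (c Ibar : ℝ) (p I : ℝ → ℝ) : Prop :=
  ContinuousOn p (Set.Ici 0) ∧
  IntegrableOn p (Set.Ici 0) ∧
  (∀ t, 0 ≤ t → 0 ≤ p t) ∧
  I 0 = 0 ∧
  (∀ t, 0 ≤ t → 0 ≤ I t) ∧
  (∀ t, 0 ≤ t → DifferentiableWithinAt ℝ I (Set.Ici 0) t) ∧
  (∀ t, 0 ≤ t → derivWithin I (Set.Ici 0) t ≤ c - p t * (Ibar - I t))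

private lemma prim_hasDerivAt {f : ℝ → ℝ} (hf : ContinuousOn f (Set.Ici 0))
    {x : ℝ} (hx : 0 < x) :
    HasDerivAt (fun T => ∫ t in (0:ℝ)..T, f t) (f x) x := by
  have hmem : Set.Ici (0:ℝ) ∈ nhds x := Ici_mem_nhds hx
  have hca : ContinuousAt f x := (hf x hx.le).continuousAt hmem
  refine intervalIntegral.integral_hasDerivAt_right ?_ ?_ hca
  · exact (hf.mono (fun t ht => (Set.uIcc_of_le hx.le ▸ ht).1)).intervalIntegrable
  · exact ContinuousOn.stronglyMeasurableAtFilter isOpen_Ioi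
      (hf.mono Set.Ioi_subset_Ici_self) x hx

private lemma prim_continuousOn {f : ℝ → ℝ} (hf : ContinuousOn f (Set.Ici 0)) :
    ContinuousOn (fun T => ∫ t in (0:ℝ)..T, f t) (Set.Ici 0) := by
  intro x hx
  have hx0 : (0:ℝ) ≤ x := hx
  have hx1 : (0:ℝ) ≤ x + 1 := by linarith
  have hint : IntervalIntegrable f volume (min 0 0) (max 0 (x + 1)) := by
    rw [min_self, max_eq_right hx1]
    exact (hf.mono (fun t ht => (Set.uIcc_of_le hx1 ▸ ht).1)).intervalIntegrable
  have h1 : ContinuousWithinAt (fun T => ∫ t in (0:ℝ)..T, f t) (Set.Icc 0 (x + 1)) x :=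
    intervalIntegral.continuousWithinAt_primitive (measure_singleton x) hint
  apply h1.mono_of_mem_nhdsWithin
  rw [← Set.Ici_inter_Iic]
  exact Filter.inter_mem self_mem_nhdsWithin
    (mem_nhdsWithin_of_mem_nhds (Iic_mem_nhds (by linarith)))

/-- For every continuous feasible strategy, `∫_0^T P(t) dt ≤ ∫_0^T (1 − e^{−(c/Ī)t}) dt`
for all `T ≥ 0`; in particular an exhaustive strategy (expected stopping time
`∫_0^∞ (1 − P(t)) dt = Ī/c`) has the same mean as the exponential distribution with
rate `c/Ī`, so the exponential distribution is a mean-preserving spread of its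
stopping time distribution (second-order stochastic dominance). -/
theorem cont_CDF_integral_le_exponential
    (c Ibar : ℝ) (hc : 0 < c) (hcI : c < Ibar)
    (p I : ℝ → ℝ) (hfeas : ContFeasible c Ibar p I) :
    (∀ T : ℝ, 0 ≤ T →
      ∫ t in (0:ℝ)..T, contCDF p t ≤ ∫ t in (0:ℝ)..T, (1 - Real.exp (-(c / Ibar) * t))) ∧
    ((∫ t in Set.Ioi (0:ℝ), (1 - contCDF p t)) = Ibar / c →
      ((∫ t in Set.Ioi (0:ℝ), (1 - contCDF p t)) =
          ∫ t in Set.Ioi (0:ℝ), Real.exp (-(c / Ibar) * t) ∧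
        ∀ T : ℝ, 0 ≤ T →
          ∫ t in (0:ℝ)..T, contCDF p t ≤
            ∫ t in (0:ℝ)..T, (1 - Real.exp (-(c / Ibar) * t)))) := by
  obtain ⟨hp_cont, hp_int, hp_nonneg, hI0, hI_nonneg, hI_diff, hI_deriv⟩ := hfeas
  have hIbar : 0 < Ibar := hc.trans hcI
  obtain ⟨r, hr_def⟩ : ∃ r : ℝ, r = c / Ibar := ⟨_, rfl⟩
  rw [show c / Ibar = r from hr_def.symm]
  have hr : 0 < r := hr_def ▸ div_pos hc hIbar
  set A : ℝ → ℝ := fun t => ∫ s in (0:ℝ)..t, p s with hA_def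
  set Q : ℝ → ℝ := fun t => Real.exp (-(A t)) with hQ_def
  have hQ_pos : ∀ t, 0 < Q t := fun t => Real.exp_pos _
  have hA_cont : ContinuousOn A (Set.Ici 0) := prim_continuousOn hp_cont
  have hQ_cont : ContinuousOn Q (Set.Ici 0) :=
    Real.continuous_exp.comp_continuousOn hA_cont.neg
  set u : ℝ → ℝ := fun T => ∫ t in (0:ℝ)..T, Q t with hu_def
  have hu_cont : ContinuousOn u (Set.Ici 0) := prim_continuousOn hQ_cont
  have hu_deriv : ∀ x : ℝ, 0 < x → HasDerivAt u (Q x) x :=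
    fun x hx => prim_hasDerivAt hQ_cont hx
  have hQ_deriv : ∀ x : ℝ, 0 < x → HasDerivAt Q (-(p x) * Q x) x := by
    intro x hx
    have hA := prim_hasDerivAt hp_cont hx
    have := (hA.neg).exp
    simpa [hQ_def, mul_comm] using this
  have hI_dx : ∀ x : ℝ, 0 < x → HasDerivAt I (derivWithin I (Set.Ici 0) x) x := by
    intro x hx
    have h := (hI_diff x hx.le).differentiableAt (Ici_mem_nhds hx)
    rw [derivWithin_of_mem_nhds (Ici_mem_nhds hx)]
    exact h.hasDerivAt
  have hI_cont : ContinuousOn I (Set.Ici 0) :=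
    fun x hx => (hI_diff x hx).continuousWithinAt
  -- H is monotone
  set H : ℝ → ℝ := fun T => (Ibar - I T) * Q T + c * u T with hH_def
  have hH_deriv : ∀ x : ℝ, 0 < x →
      HasDerivAt H ((0 - derivWithin I (Set.Ici 0) x) * Q x
        + (Ibar - I x) * (-(p x) * Q x) + c * Q x) x := by
    intro x hx
    exact (((hasDerivAt_const x Ibar).sub (hI_dx x hx)).mul (hQ_deriv x hx)).add
      ((hu_deriv x hx).const_mul c)
  have hH_mono : MonotoneOn H (Set.Ici 0) := by
    apply monotoneOn_of_deriv_nonneg (convex_Ici 0)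
    · exact ((continuousOn_const.sub hI_cont).mul hQ_cont).add
        (continuousOn_const.mul hu_cont)
    · rw [interior_Ici]
      exact fun x hx => ((hH_deriv x hx).differentiableAt).differentiableWithinAt
    · rw [interior_Ici]
      intro x hx
      rw [(hH_deriv x hx).deriv]
      have h1 := hI_deriv x hx.le
      have h2 : (0:ℝ) ≤ Q x := (hQ_pos x).le
      nlinarith [mul_nonneg h2 (sub_nonneg.mpr h1)]
  have hkey : ∀ T : ℝ, 0 ≤ T → Ibar ≤ Ibar * Q T + c * u T := by
    intro T hT
    have h0 : H 0 = Ibar := by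
      simp [hH_def, hI0, hQ_def, hA_def, hu_def, intervalIntegral.integral_same]
    have hmono := hH_mono (Set.self_mem_Ici) (Set.mem_Ici.mpr hT) hT
    rw [h0] at hmono
    have : (Ibar - I T) * Q T ≤ Ibar * Q T :=
      mul_le_mul_of_nonneg_right (by linarith [hI_nonneg T hT]) (hQ_pos T).le
    calc Ibar ≤ H T := hmono
    _ = (Ibar - I T) * Q T + c * u T := rfl
    _ ≤ Ibar * Q T + c * u T := by linarith
  -- the comparison function v
  set v : ℝ → ℝ := fun T => (1 - Real.exp (-r * T)) / r with hv_def
  have hv_deriv : ∀ x : ℝ, HasDerivAt v (Real.exp (-r * x)) x := by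
    intro x
    have h1 : HasDerivAt (fun T : ℝ => -r * T) (-r) x := by
      simpa using (hasDerivAt_id x).const_mul (-r)
    have h2 := h1.exp
    have h3 := ((hasDerivAt_const x (1:ℝ)).sub h2).div_const r
    convert h3 using 1
    · rfl
    · rfl
    · rfl
    · rw [zero_sub, mul_neg, neg_neg, mul_div_assoc, div_self hr.ne', mul_one]
  have hv_int : ∀ T : ℝ, (∫ t in (0:ℝ)..T, Real.exp (-r * t)) = v T := by
    intro T
    rw [intervalIntegral.integral_comp_mul_left (fun y => Real.exp y)
      (neg_ne_zero.mpr hr.ne'), integral_exp, smul_eq_mul, mul_zero, Real.exp_zero, hv_def]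
    field_simp
    rw [neg_sub]
  -- Gronwall: u ≥ v on [0, ∞)
  have huv : ∀ T : ℝ, 0 ≤ T → v T ≤ u T := by
    intro T hT
    set w : ℝ → ℝ := fun T => Real.exp (r * T) * (u T - v T) with hw_def
    have hw_mono : MonotoneOn w (Set.Ici 0) := by
      apply monotoneOn_of_deriv_nonneg (convex_Ici 0)
      · exact (Real.continuous_exp.comp (continuous_const.mul continuous_id)).continuousOn.mul
          (hu_cont.sub ((continuous_const.sub (Real.continuous_exp.comp
            (continuous_const.mul continuous_id))).div_const r).continuousOn)
      · rw [interior_Ici]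
        intro x hx
        have h1 : HasDerivAt (fun T : ℝ => Real.exp (r * T)) (Real.exp (r * x) * r) x := by
          simpa using ((hasDerivAt_id x).const_mul r).exp
        exact ((h1.mul ((hu_deriv x hx).sub (hv_deriv x))).differentiableAt).differentiableWithinAt
      · rw [interior_Ici]
        intro x hx
        have h1 : HasDerivAt (fun T : ℝ => Real.exp (r * T)) (Real.exp (r * x) * r) x := by
          simpa using ((hasDerivAt_id x).const_mul r).exp
        rw [show deriv w x = _ from (h1.mul ((hu_deriv x hx).sub (hv_deriv x))).deriv]
        have hkx := hkey x hx.le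
        have hrv : r * v x = 1 - Real.exp (-r * x) := by
          rw [hv_def]; field_simp
        have hq : 1 ≤ Q x + r * u x := by
          have : Ibar * (Q x + r * u x) = Ibar * Q x + c * u x := by
            rw [hr_def]; field_simp
          nlinarith
        have he : (0:ℝ) < Real.exp (r * x) := Real.exp_pos _
        rw [Pi.sub_apply]
        nlinarith [he.le]
    have h0 : w 0 = 0 := by
      simp [hw_def, hv_def, hu_def, intervalIntegral.integral_same]
    have := hw_mono Set.self_mem_Ici (Set.mem_Ici.mpr hT) hT
    rw [h0] at this
    have he : (0:ℝ) < Real.exp (r * T) := Real.exp_pos _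
    have h2 : 0 ≤ Real.exp (r * T) * (u T - v T) := this
    by_contra h
    push_neg at h
    nlinarith
  -- Part 1
  have hCDF : ∀ t, contCDF p t = 1 - Q t := fun t => rfl
  have part1 : ∀ T : ℝ, 0 ≤ T →
      ∫ t in (0:ℝ)..T, contCDF p t ≤ ∫ t in (0:ℝ)..T, (1 - Real.exp (-r * t)) := by
    intro T hT
    have hQi : IntervalIntegrable Q volume 0 T :=
      (hQ_cont.mono (fun t ht => (Set.uIcc_of_le hT ▸ ht).1)).intervalIntegrable
    have hEi : IntervalIntegrable (fun t => Real.exp (-r * t)) volume 0 T :=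
      (Real.continuous_exp.comp (continuous_const.mul continuous_id)).intervalIntegrable 0 T
    have hL : (∫ t in (0:ℝ)..T, contCDF p t) = T - u T := by
      simp only [hCDF]
      rw [intervalIntegral.integral_sub intervalIntegrable_const hQi]
      simp [hu_def]
    have hR : (∫ t in (0:ℝ)..T, (1 - Real.exp (-r * t))) = T - v T := by
      rw [intervalIntegral.integral_sub intervalIntegrable_const hEi, hv_int T]
      simp
    rw [hL, hR]
    linarith [huv T hT]
  refine ⟨part1, fun hE => ⟨?_, part1⟩⟩
  have hexp : (∫ t in Set.Ioi (0:ℝ), Real.exp (-r * t)) = Ibar / c := by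
    have h := integral_comp_mul_left_Ioi (fun x => Real.exp (-x)) 0 hr
    simp only [mul_zero, neg_zero, smul_eq_mul, integral_exp_neg_Ioi, Real.exp_zero,
      mul_one] at h
    simp only [neg_mul]
    rw [h, hr_def, inv_div]
  rw [hE, hexp]
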